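/- Let A be an abelian group with an ω₁-filtration {A_ν : ν < ω₁} (a continuous increasing chain of subgroups with union A and A₀ = 0). Suppose {t_ν : A → A_ν : ν ∈ succ(ω₁)} is a family of idempotent endomorphisms onto the A_ν for successor ν. Suppose further that for every idempotent endomorphism π of A with countable range there is a finite set W_π ⊆ succ(ω₁) such that t_ν(a) = 0 for all ν ∈ W_π implies π(a) = 0; and that for all finite W₀, W₁ ⊆ succ(ω₁) with β = sup(W₀ ∩ W₁), there exist elements y₀, y₁ ∈ A with 0 ≠ p·y₁ − y₀ ∈ A_{β+1} and t_ν(y_ℓ) = 0 for all ν ∈ W_ℓ (ℓ = 0,1). Then A has no coherent unbounded system of projections, i.e., there is no family {π_i : i ∈ I} of idempotent endomorphisms with countable free ranges H_i, unbounded (every countable X ⊆ A is contained in some H_i), and coherent (H_j ⊆ H_i implies π_j ∘ π_i = π_j). -/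

import Mathlib

section AuxStmt11
open Ordinal Cardinal

lemma auxCountableIio {o : Ordinal} (h : o < ω₁) : (Set.Iio o).Countable := by
  rw [countable_iff_lt_aleph_one, Ordinal.mk_Iio_ordinal, lift_lt_aleph_one]
  rwa [← Cardinal.ord_aleph, Cardinal.lt_ord] at h

lemma auxNotCountableIio : ¬ (Set.Iio (ω₁ : Ordinal)).Countable := by
  rw [countable_iff_lt_aleph_one, Ordinal.mk_Iio_ordinal, lift_lt_aleph_one]
  simp [Ordinal.card_omega]

lemma auxSuccLt {o : Ordinal} (h : o < ω₁) : o + 1 < ω₁ := by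
  rw [Ordinal.add_one_eq_succ]
  exact (Cardinal.isSuccLimit_omega 1).succ_lt h

lemma auxPair (W : Ordinal → Finset Ordinal)
    (hW : ∀ α, α < ω₁ → ∀ ν ∈ W α, ν < ω₁) :
    ∃ α α', α < α' ∧ α' < ω₁ ∧ ∀ ν ∈ W α ∩ W α', ν ≤ α := by
  by_contra hcon
  push_neg at hcon
  -- hcon : ∀ α α', α < α' → α' < ω₁ → ∃ ν ∈ W α ∩ W α', α < ν
  have h1 : ∃ n : ℕ, ¬ {α : Ordinal | α < ω₁ ∧ (W α).card = n}.Countable := by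
    by_contra h
    push_neg at h
    apply auxNotCountableIio
    have hsub : Set.Iio (ω₁:Ordinal) ⊆ ⋃ n : ℕ, {α | α < ω₁ ∧ (W α).card = n} :=
      fun α hα => Set.mem_iUnion.2 ⟨(W α).card, hα, rfl⟩
    exact (Set.countable_iUnion h).mono hsub
  obtain ⟨n, hn⟩ := h1
  set U := {α : Ordinal | α < ω₁ ∧ (W α).card = n} with hU
  have key : ∀ m : ℕ, ∃ (U' : Set Ordinal) (s : Finset Ordinal),
      U' ⊆ U ∧ ¬ U'.Countable ∧ s.card = m ∧ (∀ ν ∈ s, ν < ω₁) ∧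
      ∀ α ∈ U', ∀ ν ∈ s, ν ∈ W α := by
    intro m
    induction m with
    | zero => exact ⟨U, ∅, subset_rfl, hn, rfl, by simp, by simp⟩
    | succ m ih =>
      obtain ⟨U', s, hU'U, hU'c, hcard, hslt, hsW⟩ := ih
      set δ := s.sup id with hδ
      have hδlt : δ < ω₁ :=
        (Finset.sup_lt_iff (Ordinal.omega_pos 1)).2 (fun b hb => hslt b hb)
      have hex : ∃ α ∈ U', δ < α := by
        by_contra h
        push_neg at h
        apply hU'c
        refine (auxCountableIio (auxSuccLt hδlt)).mono ?_
        intro x hx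
        have : x ≤ δ := h x hx
        exact this.trans_lt (Order.lt_succ δ |>.trans_eq (Ordinal.add_one_eq_succ δ).symm)
      obtain ⟨α, hαU', hδα⟩ := hex
      have hαω : α < ω₁ := (hU'U hαU').1
      set T := {α' ∈ U' | α < α'} with hT
      have hTc : ¬ T.Countable := by
        intro hTct
        apply hU'c
        refine (hTct.union (auxCountableIio (auxSuccLt hαω))).mono ?_
        intro x hx
        by_cases hxα : α < x
        · exact Or.inl ⟨hx, hxα⟩
        · exact Or.inr ((not_lt.1 hxα).trans_lt
            (Order.lt_succ α |>.trans_eq (Ordinal.add_one_eq_succ α).symm))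
      have hpig : ∃ ν ∈ W α, α < ν ∧ ¬ {α' ∈ T | ν ∈ W α'}.Countable := by
        by_contra h
        push_neg at h
        apply hTc
        have hsub : T ⊆ ⋃ ν ∈ (W α : Finset Ordinal), ⋃ (_ : α < ν), {α' ∈ T | ν ∈ W α'} := by
          intro α' hα'
          obtain ⟨hα'U', hαα'⟩ := hα'
          obtain ⟨ν, hνmem, hνgt⟩ := hcon α α' hαα' (hU'U hα'U').1
          have hνα := Finset.mem_inter.1 hνmem
          exact Set.mem_iUnion₂.2 ⟨ν, hνα.1,
            Set.mem_iUnion.2 ⟨hνgt, ⟨⟨hα'U', hαα'⟩, hνα.2⟩⟩⟩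
        refine Set.Countable.mono hsub ?_
        refine Set.Countable.biUnion ((W α).countable_toSet) (fun ν hν => ?_)
        exact Set.countable_iUnion (fun hgt => h ν hν hgt)
      obtain ⟨ν₀, hν₀W, hαν₀, hT'c⟩ := hpig
      refine ⟨{α' ∈ T | ν₀ ∈ W α'}, insert ν₀ s, ?_, hT'c, ?_, ?_, ?_⟩
      · exact fun x hx => hU'U hx.1.1
      · rw [Finset.card_insert_of_notMem, hcard]
        intro hmem
        exact absurd (Finset.le_sup (f := id) hmem) (not_le.2 (hδα.trans hαν₀))
      · intro ν hν
        rcases Finset.mem_insert.1 hν with rfl | hν'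
        · exact hW α hαω ν hν₀W
        · exact hslt ν hν'
      · rintro b ⟨⟨hbU', hαb⟩, hν₀b⟩ ν hν
        rcases Finset.mem_insert.1 hν with rfl | hν'
        · exact hν₀b
        · exact hsW b hbU' ν hν'
  obtain ⟨U', s, hU'U, hU'c, hcard, _, hsW⟩ := key (n+1)
  have hne : U'.Nonempty := by
    rw [Set.nonempty_iff_ne_empty]
    rintro rfl
    exact hU'c Set.countable_empty
  obtain ⟨α, hα⟩ := hne
  have hsub : s ⊆ W α := fun ν hν => hsW α hα ν hν
  have h1 := Finset.card_le_card hsub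
  have h2 : (W α).card = n := (hU'U hα).2
  omega

lemma auxChain {A I : Type} [Nonempty I] (H : I → Set A)
    (hH : ∀ i, (H i).Countable)
    (hunb : ∀ X : Set A, X.Countable → ∃ i, X ⊆ H i)
    (C : Ordinal → Set A) (hC : ∀ α, α < ω₁ → (C α).Countable) :
    ∃ k : Ordinal → I, ∀ α, α < ω₁ →
      C α ⊆ H (k α) ∧ ∀ γ, γ ≤ α → H (k γ) ⊆ H (k α) := by
  have hcnt : ∀ (α : Ordinal), α < ω₁ → ∀ g : Set.Iio α → I,
      (C α ∪ ⋃ γ, H (g γ)).Countable := by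
    intro α hα g
    have := (auxCountableIio hα).to_subtype
    exact (hC α hα).union (Set.countable_iUnion fun γ => hH _)
  classical
  let F : ∀ α : Ordinal, (∀ γ, γ < α → I) → I := fun α rec =>
    if h : α < ω₁ then
      (hunb _ (hcnt α h (fun γ => rec γ.1 γ.2))).choose
    else Classical.arbitrary I
  let k : Ordinal → I := fun α => (wellFounded_lt (α := Ordinal)).fix F α
  have hk : ∀ α, k α = F α (fun γ _ => k γ) := fun α =>
    WellFounded.fix_eq _ F α
  refine ⟨k, fun α hα => ?_⟩
  have hspec : C α ∪ ⋃ γ : Set.Iio α, H (k γ.1) ⊆ H (k α) := by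
    conv_rhs => rw [hk α]
    show _ ⊆ H (dite _ _ _)
    rw [dif_pos hα]
    exact (hunb _ (hcnt α hα _)).choose_spec
  constructor
  · exact fun x hx => hspec (Or.inl hx)
  · intro γ hγ
    rcases eq_or_lt_of_le hγ with rfl | hγ'
    · exact subset_rfl
    · exact fun x hx => hspec (Or.inr (Set.mem_iUnion.2 ⟨⟨γ, hγ'⟩, hx⟩))


end AuxStmt11


open Ordinal in
/-- Let `A` be an uncountable abelian group with an `ω₁`-filtration
`(Af ν)_{ν<ω₁}` (increasing, continuous at limits, `Af 0 = 0`, union `A`, each `Af (ν+1)`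
countable), with idempotent endomorphisms `t ν` onto `Af ν` for successor `ν < ω₁`,
satisfying properties (I) and (II) of the construction.  Then `A` has no coherent unbounded
system of projections: there is no family `π i` of idempotent endomorphisms with countable
free ranges `H i` such that every countable subset of `A` lies in some `H i`, and
`H j ⊆ H i → π j ∘ π i = π j`. -/
theorem stmt11 (p : ℕ) (hp : p.Prime) (A : Type) [AddCommGroup A] (hunc : ¬ Countable A)
    (Af : Ordinal → AddSubgroup A)
    (hmono : ∀ μ ν, μ ≤ ν → ν < ω₁ → Af μ ≤ Af ν)
    (hzero : Af 0 = ⊥)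
    (hcont : ∀ ν < ω₁, Order.IsSuccLimit ν → Af ν = ⨆ μ ∈ Set.Iio ν, Af μ)
    (hunion : ⨆ ν ∈ Set.Iio ω₁, Af ν = ⊤)
    (hctble : ∀ ν < ω₁, Countable (Af (ν + 1)))
    (t : Ordinal → A →+ A)
    (hidem : ∀ ν < ω₁, (∃ μ, ν = μ + 1) → (t ν).comp (t ν) = t ν)
    (hrange : ∀ ν < ω₁, (∃ μ, ν = μ + 1) → (t ν).range = Af ν)
    -- property (I)
    (hI : ∀ π : A →+ A, π.comp π = π → Countable π.range →
      ∃ W : Finset Ordinal, (∀ ν ∈ W, ν < ω₁ ∧ ∃ μ, ν = μ + 1) ∧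
        ∀ a : A, (∀ ν ∈ W, t ν a = 0) → π a = 0)
    -- property (II)
    (hII : ∀ W₀ W₁ : Finset Ordinal,
      (∀ ν ∈ W₀, ν < ω₁ ∧ ∃ μ, ν = μ + 1) → (∀ ν ∈ W₁, ν < ω₁ ∧ ∃ μ, ν = μ + 1) →
      ∃ y₀ y₁ : A,
        (p : ℤ) • y₁ - y₀ ≠ 0 ∧
        (p : ℤ) • y₁ - y₀ ∈ Af ((W₀ ∩ W₁).sup id + 1) ∧
        (∀ ν ∈ W₀, t ν y₀ = 0) ∧ (∀ ν ∈ W₁, t ν y₁ = 0)) :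
    ¬ ∃ (I : Type) (π : I → A →+ A),
        (∀ i, (π i).comp (π i) = π i) ∧
        (∀ i, Countable ((π i).range)) ∧
        (∀ i, Module.Free ℤ ((π i).range)) ∧
        (∀ X : Set A, X.Countable → ∃ i, X ⊆ (π i).range) ∧
        (∀ i j, (π j).range ≤ (π i).range → (π j).comp (π i) = π j) := by
  rintro ⟨I, π, hidem', hct, hfree, hunb, hcoh⟩
  have hne : Nonempty I := ⟨(hunb ∅ Set.countable_empty).choose⟩
  have hH : ∀ i, (((π i).range : AddSubgroup A) : Set A).Countable := fun i =>
    Set.countable_coe_iff.1 (hct i)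
  obtain ⟨k, hk⟩ := auxChain (fun i => (((π i).range : AddSubgroup A) : Set A)) hH
    (fun X hX => hunb X hX)
    (fun α => ((Af (α + 1) : AddSubgroup A) : Set A))
    (fun α hα => Set.countable_coe_iff.1 (hctble α hα))
  have hWex : ∀ α : Ordinal, ∃ W : Finset Ordinal,
      (∀ ν ∈ W, ν < ω₁ ∧ ∃ μ, ν = μ + 1) ∧
      ∀ a : A, (∀ ν ∈ W, t ν a = 0) → π (k α) a = 0 :=
    fun α => hI (π (k α)) (hidem' _) (hct _)
  choose W hW1 hW2 using hWex
  obtain ⟨α, α', hlt, hα'ω, hle⟩ := auxPair W (fun β _ ν hν => (hW1 β ν hν).1)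
  have hαω : α < ω₁ := hlt.trans hα'ω
  set β := ((W α ∩ W α').sup id) with hβdef
  have hβα : β ≤ α := Finset.sup_le (fun ν hν => hle ν hν)
  have hβω : β < ω₁ := lt_of_le_of_lt hβα hαω
  obtain ⟨y₀, y₁, hz0, hzmem, hy₀, hy₁⟩ := hII (W α) (W α') (hW1 α) (hW1 α')
  set z := (p : ℤ) • y₁ - y₀ with hzdef
  have ha0 : π (k α) y₀ = 0 := hW2 α y₀ hy₀
  have hb0 : π (k α') y₁ = 0 := hW2 α' y₁ hy₁
  have hmem_m : z ∈ (π (k β)).range := (hk β hβω).1 hzmem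
  have hma : (π (k β)).comp (π (k α)) = π (k β) :=
    hcoh (k α) (k β) (fun x hx => (hk α hαω).2 β hβα hx)
  have hab : (π (k α)).comp (π (k α')) = π (k α) :=
    hcoh (k α') (k α) (fun x hx => (hk α' hα'ω).2 α hlt.le hx)
  have h1 : π (k α') z = - π (k α') y₀ := by
    simp [hzdef, hb0]
  have h2 : π (k α) z = 0 := by
    calc π (k α) z = (π (k α)).comp (π (k α')) z := by rw [hab]
      _ = π (k α) (π (k α') z) := rfl
      _ = π (k α) (- π (k α') y₀) := by rw [h1]
      _ = - ((π (k α)).comp (π (k α')) y₀) := by rw [map_neg]; rfl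
      _ = - (π (k α) y₀) := by rw [hab]
      _ = 0 := by rw [ha0, neg_zero]
  have h3 : π (k β) z = 0 := by
    calc π (k β) z = (π (k β)).comp (π (k α)) z := by rw [hma]
      _ = π (k β) (π (k α) z) := rfl
      _ = 0 := by rw [h2, map_zero]
  obtain ⟨c, hc⟩ := hmem_m
  have hfix : π (k β) z = z := by
    conv_lhs => rw [← hc]
    calc π (k β) (π (k β) c) = (π (k β)).comp (π (k β)) c := rfl
      _ = π (k β) c := by rw [hidem' (k β)]
      _ = z := hc
  exact hz0 (by rw [← hfix, h3])
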